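/- Let V be a finite-dimensional vector space over a field of characteristic zero with basis indexed by the nodes of a connected skew-diagram S ⊆ ℤ × ℤ whose leftmost column has top square (i0, j0+k) and bottom square (i0, j0), and whose rightmost column has top square (i1, j1+l) and bottom square (i1, j1), with j0 > j1 and j0 + k > j1 + l and k ≤ l. Let e1, e2 be the associated shift operators. Then the endomorphism x defined by x(v_{(i0,j)}) = v_{(i1, j1+l−j0−k+j)} for j0 ≤ j ≤ j0+k and x = 0 on all other basis vectors satisfies [x, e1] = [x, e2] = 0, and x is an eigenvector of the bigrading with second coordinate q = j1 + l − j0 − k < 0. -/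

import Mathlib

theorem stmt14 {K V : Type*} [Field K] [CharZero K] [AddCommGroup V] [Module K V]
    (S : Finset (ℤ × ℤ))
    (hclosure : ∀ i j : ℤ, (i, j) ∈ S → (i + 1, j + 1) ∈ S →
      (i + 1, j) ∈ S ∧ (i, j + 1) ∈ S)
    (hconn : ∀ p ∈ S, ∀ q ∈ S, Relation.ReflTransGen
      (fun u v : ℤ × ℤ => u ∈ S ∧ v ∈ S ∧ (u.1 - v.1) ^ 2 + (u.2 - v.2) ^ 2 = 1) p q)
    (i0 i1 j0 j1 kk ll : ℤ) (hkk : 0 ≤ kk) (hll : 0 ≤ ll)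
    (hrange : ∀ p ∈ S, i0 ≤ p.1 ∧ p.1 ≤ i1)
    (hleft : ∀ j : ℤ, (i0, j) ∈ S ↔ j0 ≤ j ∧ j ≤ j0 + kk)
    (hright : ∀ j : ℤ, (i1, j) ∈ S ↔ j1 ≤ j ∧ j ≤ j1 + ll)
    (hjj : j1 < j0) (hjkl : j1 + ll < j0 + kk) (hkl : kk ≤ ll)
    (b : Module.Basis {p : ℤ × ℤ // p ∈ S} K V)
    (e1 e2 h1 h2 x : Module.End K V)
    (he1 : ∀ (p : ℤ × ℤ) (hp : p ∈ S),
      e1 (b ⟨p, hp⟩) = if h : (p.1 + 1, p.2) ∈ S then b ⟨(p.1 + 1, p.2), h⟩ else 0)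
    (he2 : ∀ (p : ℤ × ℤ) (hp : p ∈ S),
      e2 (b ⟨p, hp⟩) = if h : (p.1, p.2 + 1) ∈ S then b ⟨(p.1, p.2 + 1), h⟩ else 0)
    (hh1 : ∀ (p : ℤ × ℤ) (hp : p ∈ S), h1 (b ⟨p, hp⟩) = (p.1 : K) • b ⟨p, hp⟩)
    (hh2 : ∀ (p : ℤ × ℤ) (hp : p ∈ S), h2 (b ⟨p, hp⟩) = (p.2 : K) • b ⟨p, hp⟩)
    (hx : ∀ (p : ℤ × ℤ) (hp : p ∈ S), x (b ⟨p, hp⟩) =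
      if p.1 = i0 then
        (if h : (i1, j1 + ll - j0 - kk + p.2) ∈ S then
          b ⟨(i1, j1 + ll - j0 - kk + p.2), h⟩ else 0)
      else 0) :
    Commute x e1 ∧ Commute x e2 ∧
      h1 * x - x * h1 = ((i1 - i0 : ℤ) : K) • x ∧
      h2 * x - x * h2 = ((j1 + ll - j0 - kk : ℤ) : K) • x ∧
      j1 + ll - j0 - kk < 0 := by
  have hi0i1 : i0 ≤ i1 := (hrange (i0, j0) ((hleft j0).mpr ⟨le_refl _, by omega⟩)).2
  have hmem : ∀ j : ℤ, j0 ≤ j → j ≤ j0 + kk → (i1, j1 + ll - j0 - kk + j) ∈ S :=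
    fun j ha hb => (hright _).mpr ⟨by omega, by omega⟩
  have hxe1 : x * e1 = 0 := by
    refine b.ext fun p => ?_
    obtain ⟨⟨pi, pj⟩, hp⟩ := p
    simp only [Module.End.mul_apply, LinearMap.zero_apply]
    rw [he1 _ hp]
    split_ifs with h
    · rw [hx _ h]
      have hr := hrange _ hp
      rw [if_neg (by simp at hr ⊢; omega)]
    · exact map_zero x
  have he1x : e1 * x = 0 := by
    refine b.ext fun p => ?_
    obtain ⟨⟨pi, pj⟩, hp⟩ := p
    simp only [Module.End.mul_apply, LinearMap.zero_apply]
    rw [hx _ hp]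
    split_ifs with h h2
    · rw [he1 _ h2]
      rw [dif_neg]
      intro hm
      have := (hrange _ hm).2
      simp at this
    · exact map_zero e1
    · exact map_zero e1
  refine ⟨?_, ?_, ?_, ?_, by omega⟩
  · show x * e1 = e1 * x
    rw [hxe1, he1x]
  · show x * e2 = e2 * x
    refine b.ext fun p => ?_
    obtain ⟨⟨pi, pj⟩, hp⟩ := p
    simp only [Module.End.mul_apply]
    rw [he2 _ hp, hx _ hp]
    simp only
    by_cases hpi : pi = i0
    · subst hpi
      have hpj := (hleft pj).mp hp
      rw [if_pos rfl, dif_pos (hmem pj hpj.1 hpj.2), he2 _ (hmem pj hpj.1 hpj.2)]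
      by_cases hs : (pi, pj + 1) ∈ S
      · rw [dif_pos hs, hx _ hs, if_pos rfl]
        simp only
        by_cases ht : (i1, j1 + ll - j0 - kk + (pj + 1)) ∈ S
        · rw [dif_pos ht, dif_pos (show (i1, j1 + ll - j0 - kk + pj + 1) ∈ S by
            convert ht using 2; ring)]
          congr 2
          ring_nf
        · rw [dif_neg ht, dif_neg (fun hc => ht (by convert hc using 2; ring))]
      · have hpj1 : pj = j0 + kk := by
          have := (hleft (pj + 1)).not.mp hs
          omega
        rw [dif_neg hs, map_zero, dif_neg]
        intro hc
        have h2' := ((hright _).mp hc).2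
        omega
    · rw [if_neg hpi]
      split_ifs with hs
      · rw [hx _ hs, if_neg (by simpa using hpi), map_zero]
      · rw [map_zero, map_zero]
  · refine b.ext fun p => ?_
    obtain ⟨⟨pi, pj⟩, hp⟩ := p
    simp only [LinearMap.sub_apply, Module.End.mul_apply, LinearMap.smul_apply]
    rw [hh1 _ hp, map_smul, hx _ hp]
    simp only
    by_cases hpi : pi = i0
    · subst hpi
      have hpj := (hleft pj).mp hp
      have hm := hmem pj hpj.1 hpj.2
      rw [if_pos rfl, dif_pos hm, hh1 _ hm]
      simp only
      rw [← sub_smul]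
      congr 1
      push_cast
      ring
    · rw [if_neg hpi]
      simp
  · refine b.ext fun p => ?_
    obtain ⟨⟨pi, pj⟩, hp⟩ := p
    simp only [LinearMap.sub_apply, Module.End.mul_apply, LinearMap.smul_apply]
    rw [hh2 _ hp, map_smul, hx _ hp]
    simp only
    by_cases hpi : pi = i0
    · subst hpi
      have hpj := (hleft pj).mp hp
      have hm := hmem pj hpj.1 hpj.2
      rw [if_pos rfl, dif_pos hm, hh2 _ hm]
      simp only
      rw [← sub_smul]
      congr 1
      push_cast
      ring
    · rw [if_neg hpi]
      simp
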